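/- For all points x, y of the upper half-space ℍⁿ, the inequalities th(ρ_{ℍⁿ}(x,y)/2) ≤ c̃_{ℍⁿ}(x,y) ≤ 2·th(ρ_{ℍⁿ}(x,y)/2) hold, i.e. |x−y|/√(|x−y|² + 4·xₙ·yₙ) ≤ c̃_{ℍⁿ}(x,y) ≤ 2·|x−y|/√(|x−y|² + 4·xₙ·yₙ), and the constants 1 and 2 are best possible. -/

import Mathlib

open Metric Set

/-- The upper half-space `ℍⁿ = {x ∈ ℝⁿ : xₙ > 0}` (dimension `n + 1 ≥ 1`). -/
def upperHalfSpace (n : ℕ) : Set (EuclideanSpace ℝ (Fin (n + 1))) :=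
  {x | 0 < x (Fin.last n)}

/-- Its boundary `∂ℍⁿ = {x ∈ ℝⁿ : xₙ = 0}`. -/
def upperHalfSpaceBdry (n : ℕ) : Set (EuclideanSpace ℝ (Fin (n + 1))) :=
  {x | x (Fin.last n) = 0}

/-- The new hyperbolic type metric on the upper half-space:
`c̃_{ℍⁿ}(x,y) = |x−y| / inf_{z∈∂ℍⁿ} max{|x−z|, |y−z|}`. -/
noncomputable def ctildeH {n : ℕ} (x y : EuclideanSpace ℝ (Fin (n + 1))) : ℝ :=
  dist x y / sInf ((fun z => max (dist x z) (dist y z)) '' upperHalfSpaceBdry n)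

/-- `th(ρ_{ℍⁿ}(x,y)/2) = |x−y| / √(|x−y|² + 4 xₙ yₙ)` for the hyperbolic metric of `ℍⁿ`. -/
noncomputable def thRhoH {n : ℕ} (x y : EuclideanSpace ℝ (Fin (n + 1))) : ℝ :=
  dist x y / Real.sqrt (dist x y ^ 2 + 4 * x (Fin.last n) * y (Fin.last n))

section Aux

variable {n : ℕ}
local notation "E" => EuclideanSpace ℝ (Fin (n+1))
local notation "L" => Fin.last n

lemma coord_le_dist (x z : E) (i : Fin (n+1)) : |x i - z i| ≤ dist x z := by
  rw [EuclideanSpace.dist_eq, ← Real.sqrt_sq_eq_abs (x i - z i)]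
  apply Real.sqrt_le_sqrt
  calc (x i - z i) ^ 2 = dist (x i) (z i) ^ 2 := by rw [Real.dist_eq, sq_abs]
    _ ≤ ∑ j, dist (x j) (z j) ^ 2 :=
      Finset.single_le_sum (f := fun j => dist (x j) (z j) ^ 2)
        (fun j _ => sq_nonneg _) (Finset.mem_univ i)

noncomputable def reflect (y : E) : E := WithLp.toLp 2 (fun i => if i = L then -(y i) else y i)

lemma reflect_apply (y : E) (i : Fin (n+1)) :
    reflect y i = if i = L then -(y i) else y i := rfl

lemma dist_reflect_left (y z : E) (hz : z L = 0) : dist (reflect y) z = dist y z := by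
  rw [EuclideanSpace.dist_eq, EuclideanSpace.dist_eq]
  congr 1
  apply Finset.sum_congr rfl
  intro i _
  rcases eq_or_ne i L with h | h
  · subst h
    simp [reflect_apply, hz, Real.dist_eq, abs_neg]
  · simp [reflect_apply, h]

lemma dist_reflect_sq (x y : E) :
    dist x (reflect y) ^ 2 = dist x y ^ 2 + 4 * x L * y L := by
  rw [EuclideanSpace.dist_eq, EuclideanSpace.dist_eq,
    Real.sq_sqrt (Finset.sum_nonneg fun i _ => sq_nonneg _),
    Real.sq_sqrt (Finset.sum_nonneg fun i _ => sq_nonneg _)]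
  simp only [Real.dist_eq, sq_abs]
  rw [Fin.sum_univ_castSucc, Fin.sum_univ_castSucc]
  have : ∀ i : Fin n, reflect y i.castSucc = y i.castSucc := fun i => by
    simp [reflect_apply, (Fin.castSucc_lt_last i).ne]
  have hL : reflect y L = -(y L) := by simp [reflect_apply]
  simp only [this, hL]
  ring

lemma dist_reflect_eq (x y : E) :
    dist x (reflect y) = Real.sqrt (dist x y ^ 2 + 4 * x L * y L) := by
  rw [← dist_reflect_sq x y, Real.sqrt_sq dist_nonneg]

-- lower bound: for z on boundary, D/2 ≤ max
lemma lower_bd (x y z : E) (hz : z L = 0) :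
    dist x (reflect y) / 2 ≤ max (dist x z) (dist y z) := by
  have h1 : dist x (reflect y) ≤ dist x z + dist z (reflect y) := dist_triangle _ _ _
  have h2 : dist z (reflect y) = dist y z := by
    rw [dist_comm z, dist_reflect_left y z hz, dist_comm]
  have h3 : dist x z ≤ max (dist x z) (dist y z) := le_max_left _ _
  have h4 : dist y z ≤ max (dist x z) (dist y z) := le_max_right _ _
  linarith

-- upper bound witness
lemma upper_bd (x y : E) (hx : 0 < x L) (hy : 0 < y L) :
    ∃ z : E, z L = 0 ∧ max (dist x z) (dist y z) ≤ dist x (reflect y) := by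
  set s : ℝ := x L / (x L + y L) with hs
  have hsum : 0 < x L + y L := by linarith
  have hs0 : 0 ≤ s := div_nonneg hx.le hsum.le
  have hs1 : s ≤ 1 := by
    rw [hs, div_le_one hsum]; linarith
  refine ⟨x + s • (reflect y - x), ?_, ?_⟩
  · have hrL : reflect y L = -(y L) := by simp [reflect_apply]
    show x L + (s • (reflect y - x)) L = 0
    rw [PiLp.smul_apply, PiLp.sub_apply, hrL]
    have hsx : s * (x L + y L) = x L := by rw [hs]; exact div_mul_cancel₀ _ hsum.ne'
    linear_combination -hsx
  · set z : E := x + s • (reflect y - x) with hz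
    have hdx : dist x z = s * dist x (reflect y) := by
      rw [dist_eq_norm, dist_eq_norm, hz]
      have : x - (x + s • (reflect y - x)) = s • (x - reflect y) := by module
      rw [this, norm_smul, Real.norm_eq_abs, abs_of_nonneg hs0]
    have hdz : dist z (reflect y) = (1 - s) * dist x (reflect y) := by
      rw [dist_eq_norm, dist_eq_norm, hz]
      have : x + s • (reflect y - x) - reflect y = (1 - s) • (x - reflect y) := by module
      rw [this, norm_smul, Real.norm_eq_abs, abs_of_nonneg (by linarith : (0:ℝ) ≤ 1 - s)]
    have hzL : z L = 0 := by
      have hrL : reflect y L = -(y L) := by simp [reflect_apply]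
      show x L + (s • (reflect y - x)) L = 0
      rw [PiLp.smul_apply, PiLp.sub_apply, hrL]
      have hsx : s * (x L + y L) = x L := by rw [hs]; exact div_mul_cancel₀ _ hsum.ne'
      linear_combination -hsx
    have hdy : dist y z = dist z (reflect y) := by
      rw [dist_comm z, dist_reflect_left y z hzL, dist_comm]
    have hD : 0 ≤ dist x (reflect y) := dist_nonneg
    apply max_le
    · rw [hdx]; nlinarith
    · rw [hdy, hdz]; nlinarith

lemma sInf_bounds (x y : E) (hx : 0 < x L) (hy : 0 < y L) :
    let S := (fun z => max (dist x z) (dist y z)) '' upperHalfSpaceBdry n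
    dist x (reflect y) / 2 ≤ sInf S ∧ sInf S ≤ dist x (reflect y) := by
  intro S
  obtain ⟨z₀, hz₀, hz₀le⟩ := upper_bd x y hx hy
  have hmem : max (dist x z₀) (dist y z₀) ∈ S := ⟨z₀, hz₀, rfl⟩
  have hlb : ∀ a ∈ S, dist x (reflect y) / 2 ≤ a := by
    rintro a ⟨z, hz, rfl⟩
    exact lower_bd x y z hz
  have hbdd : BddBelow S := ⟨_, hlb⟩
  constructor
  · exact le_csInf ⟨_, hmem⟩ hlb
  · exact le_trans (csInf_le hbdd hmem) hz₀le

lemma main_ineq (x y : E) (hx : x ∈ upperHalfSpace n) (hy : y ∈ upperHalfSpace n) :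
    thRhoH x y ≤ ctildeH x y ∧ ctildeH x y ≤ 2 * thRhoH x y := by
  have hx' : 0 < x L := hx
  have hy' : 0 < y L := hy
  obtain ⟨h1, h2⟩ := sInf_bounds x y hx' hy'
  set S := (fun z => max (dist x z) (dist y z)) '' upperHalfSpaceBdry n
  set D := dist x (reflect y) with hD
  have hDpos : 0 < D := by
    rw [hD, dist_reflect_eq]
    apply Real.sqrt_pos.2
    nlinarith [sq_nonneg (dist x y)]
  have hIpos : 0 < sInf S := lt_of_lt_of_le (by linarith) h1
  have hth : thRhoH x y = dist x y / D := by
    rw [thRhoH, hD, dist_reflect_eq]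
  have hct : ctildeH x y = dist x y / sInf S := rfl
  rw [hth, hct]
  constructor
  · exact div_le_div_of_nonneg_left dist_nonneg hIpos h2  -- check name
  · rw [mul_div_assoc']
    rw [div_le_div_iff₀ hIpos hDpos]
    nlinarith [dist_nonneg (x := x) (y := y)]

noncomputable def pt (t : ℝ) : E := EuclideanSpace.single L t

lemma pt_apply_last (t : ℝ) : pt t L = t := by
  simp [pt, EuclideanSpace.single_apply]

lemma pt_mem (t : ℝ) (ht : 0 < t) : pt t ∈ upperHalfSpace n := by
  show 0 < pt t L; rw [pt_apply_last]; exact ht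

lemma dist_pt (a b : ℝ) : dist (pt (n := n) a) (pt b) = |a - b| := by
  rw [pt, pt, EuclideanSpace.dist_single_same, Real.dist_eq]

lemma sInf_pt (a b : ℝ) (ha : 0 < a) (hb : 0 < b) :
    sInf ((fun z => max (dist (pt a) z) (dist (pt b) z)) '' upperHalfSpaceBdry n)
      = max a b := by
  apply le_antisymm
  · apply csInf_le
    · refine ⟨0, ?_⟩
      rintro r ⟨z, hz, rfl⟩
      exact le_max_iff.2 (Or.inl dist_nonneg)
    · refine ⟨0, ?_, ?_⟩
      · show (0 : E) L = 0; rfl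
      · show max (dist (pt a) 0) (dist (pt b) 0) = max a b
        have h : ∀ t : ℝ, 0 < t → dist (pt t) (0 : E) = t := fun t ht => by
          rw [dist_zero_right, pt, EuclideanSpace.norm_single, Real.norm_eq_abs,
            abs_of_pos ht]
        rw [h a ha, h b hb]
  · apply le_csInf
    · exact ⟨max (dist (pt a) 0) (dist (pt b) 0), ⟨0, show (0 : E) L = 0 from rfl, rfl⟩⟩
    · rintro r ⟨z, hz, rfl⟩
      have hza : a ≤ dist (pt a) z := by
        have := coord_le_dist (pt a) z L
        rw [pt_apply_last, hz, sub_zero, abs_of_pos ha] at this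
        exact this
      have hzb : b ≤ dist (pt b) z := by
        have := coord_le_dist (pt b) z L
        rw [pt_apply_last, hz, sub_zero, abs_of_pos hb] at this
        exact this
      exact max_le_max hza hzb

lemma ctilde_pt (t : ℝ) (ht : 1 < t) : ctildeH (pt (n := n) 1) (pt t) = (t - 1) / t := by
  rw [ctildeH, dist_pt, sInf_pt 1 t one_pos (by linarith),
    max_eq_right (by linarith : (1:ℝ) ≤ t), abs_of_nonpos (by linarith), neg_sub]

lemma thRho_pt (t : ℝ) (ht : 1 < t) : thRhoH (pt (n := n) 1) (pt t) = (t - 1) / (t + 1) := by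
  rw [thRhoH, dist_pt, pt_apply_last, pt_apply_last, abs_of_nonpos (by linarith), neg_sub]
  have : (t - 1) ^ 2 + 4 * 1 * t = (t + 1) ^ 2 := by ring
  rw [this, Real.sqrt_sq (by linarith)]

lemma sharp_one (c : ℝ)
    (h : ∀ x y : EuclideanSpace ℝ (Fin (n + 1)),
      x ∈ upperHalfSpace n → y ∈ upperHalfSpace n → c * thRhoH x y ≤ ctildeH x y) :
    c ≤ 1 := by
  by_contra hc
  push_neg at hc
  set t : ℝ := max 2 (2 / (c - 1)) with hts
  have ht2 : (2:ℝ) ≤ t := le_max_left _ _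
  have ht : 1 < t := by linarith
  have htc : 2 / (c - 1) ≤ t := le_max_right _ _
  have htc' : 2 ≤ t * (c - 1) := by
    rw [div_le_iff₀ (by linarith)] at htc; linarith
  have := h (pt 1) (pt t) (pt_mem 1 one_pos) (pt_mem t (by linarith))
  rw [ctilde_pt t ht, thRho_pt t ht] at this
  rw [mul_div_assoc', div_le_div_iff₀ (by linarith) (by linarith)] at this
  nlinarith

lemma sharp_two (c : ℝ)
    (h : ∀ x y : EuclideanSpace ℝ (Fin (n + 1)),
      x ∈ upperHalfSpace n → y ∈ upperHalfSpace n → ctildeH x y ≤ c * thRhoH x y) :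
    2 ≤ c := by
  have h2 := h (pt 1) (pt 2) (pt_mem 1 one_pos) (pt_mem 2 two_pos)
  rw [ctilde_pt 2 one_lt_two, thRho_pt 2 one_lt_two] at h2
  norm_num at h2
  -- h2 : 1/2 ≤ c * (1/3); so c ≥ 3/2
  have hc1 : 1 < c := by linarith
  by_contra hcon
  push_neg at hcon
  set t : ℝ := (1 + 1 / (c - 1)) / 2 with hts
  have hinv : 1 < 1 / (c - 1) := by
    rw [lt_div_iff₀ (by linarith)]; linarith
  have ht : 1 < t := by rw [hts]; linarith
  have htlt : t < 1 / (c - 1) := by rw [hts]; linarith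
  have htc : t * (c - 1) < 1 := by
    rw [lt_div_iff₀ (by linarith)] at htlt; linarith
  have := h (pt 1) (pt t) (pt_mem 1 one_pos) (pt_mem t (by linarith))
  rw [ctilde_pt t ht, thRho_pt t ht] at this
  rw [mul_div_assoc', div_le_div_iff₀ (by linarith) (by linarith)] at this
  nlinarith

end Aux

/-- For all `x, y ∈ ℍⁿ`: `th(ρ_{ℍⁿ}(x,y)/2) ≤ c̃_{ℍⁿ}(x,y) ≤ 2 th(ρ_{ℍⁿ}(x,y)/2)`,
and the constants `1` and `2` are best possible. -/
theorem stmt_8 {n : ℕ} :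
    (∀ x y : EuclideanSpace ℝ (Fin (n + 1)), x ∈ upperHalfSpace n → y ∈ upperHalfSpace n →
      thRhoH x y ≤ ctildeH x y ∧ ctildeH x y ≤ 2 * thRhoH x y) ∧
    (∀ c : ℝ, (∀ x y : EuclideanSpace ℝ (Fin (n + 1)),
      x ∈ upperHalfSpace n → y ∈ upperHalfSpace n → c * thRhoH x y ≤ ctildeH x y) → c ≤ 1) ∧
    (∀ c : ℝ, (∀ x y : EuclideanSpace ℝ (Fin (n + 1)),
      x ∈ upperHalfSpace n → y ∈ upperHalfSpace n → ctildeH x y ≤ c * thRhoH x y) → 2 ≤ c) :=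
  ⟨fun x y hx hy => main_ineq x y hx hy, fun c h => sharp_one c h, fun c h => sharp_two c h⟩
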